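/- arXiv:2007.07194 — 2 statements merged into one kernel-verified Lean document; each statement's English description precedes it below -/
import Mathlib

section
/- Let (N, σ_N) be a closed Riemannian manifold, ξ(t) = √(t²+2), and let M = ℝ ×_ξ N be the warped product with metric dt² + ξ(t)²σ_N, dim M = m. Define φ(t) = t/√(1+t²) and u(t,y) = ∫₀ᵗ φ^{−1}(ξ(τ)^{−(m−1)}) dτ. Then u is a well-defined smooth function on M (since ξ > 1 so ξ^{1−m} < 1) and u solves the minimal surface equation div(Du/√(1+|Du|²)) = 0 on M. Moreover, u is bounded on M if and only if m ≥ 3. -/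
noncomputable section

/-- On the warped product `M = ℝ ×_ξ N` with `ξ(t) = √(t²+2)` and
`dim M = m`, the radial function `u(t) = ∫₀ᵗ φ⁻¹(ξ(τ)^{1−m}) dτ` (where
`φ(t) = t/√(1+t²)`, `φ⁻¹(s) = s/√(1−s²)`) is well defined (since `ξ(τ)^{1−m} < 1`),
its flux `ξ^{m−1}·u'/√(1+u'²) ≡ 1` is constant so `u` solves the minimal surface
equation `ξ^{1−m}(ξ^{m−1} φ(u'))' = 0`, and `u` is bounded iff `m ≥ 3`. -/
theorem warped_product_minimal_graph_example (m : ℕ) (hm : 2 ≤ m)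
    (ξ : ℝ → ℝ) (hξ : ∀ t, ξ t = Real.sqrt (t ^ 2 + 2))
    (φinv : ℝ → ℝ) (hφinv : ∀ s, φinv s = s / Real.sqrt (1 - s ^ 2))
    (u : ℝ → ℝ) (hu : ∀ t, u t = ∫ τ in (0 : ℝ)..t, φinv (ξ τ ^ ((1 : ℝ) - m))) :
    (∀ t : ℝ, ξ t ^ ((1 : ℝ) - m) < 1 ∧ HasDerivAt u (φinv (ξ t ^ ((1 : ℝ) - m))) t) ∧
    (∀ t : ℝ, deriv u t / Real.sqrt (1 + deriv u t ^ 2) = ξ t ^ ((1 : ℝ) - m)) ∧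
    (∀ t : ℝ, HasDerivAt
      (fun s => ξ s ^ ((m : ℝ) - 1) * (deriv u s / Real.sqrt (1 + deriv u s ^ 2))) 0 t) ∧
    ((∃ B : ℝ, ∀ t, |u t| ≤ B) ↔ 3 ≤ m) := by
  have hξ1 : ∀ t, 1 < ξ t := by
    intro t
    rw [hξ t]
    have : (1:ℝ) < t ^ 2 + 2 := by nlinarith [sq_nonneg t]
    calc (1:ℝ) = Real.sqrt 1 := (Real.sqrt_one).symm
    _ < Real.sqrt (t ^ 2 + 2) := Real.sqrt_lt_sqrt (by norm_num) this
  have hξ0 : ∀ t, 0 < ξ t := fun t => lt_trans one_pos (hξ1 t)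
  have hexp : (1 : ℝ) - m < 0 := by
    have : (2:ℝ) ≤ m := by exact_mod_cast hm
    linarith
  set s : ℝ → ℝ := fun t => ξ t ^ ((1 : ℝ) - m) with hs
  have hs0 : ∀ t, 0 < s t := fun t => Real.rpow_pos_of_pos (hξ0 t) _
  have hs1 : ∀ t, s t < 1 := fun t =>
    Real.rpow_lt_one_of_one_lt_of_neg (hξ1 t) hexp
  have hden : ∀ t, 0 < 1 - s t ^ 2 := by
    intro t
    have h1 := hs0 t; have h2 := hs1 t
    nlinarith
  -- continuity of ξ
  have hξc : Continuous ξ := by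
    have : Continuous fun t : ℝ => Real.sqrt (t ^ 2 + 2) :=
      (continuous_pow 2 |>.add continuous_const).sqrt
    have he : ξ = fun t : ℝ => Real.sqrt (t ^ 2 + 2) := funext hξ
    rw [he]; exact this
  have hsc : Continuous s := by
    apply hξc.rpow_const
    intro t; exact Or.inl (ne_of_gt (hξ0 t))
  set g : ℝ → ℝ := fun t => φinv (s t) with hg
  have hgc : Continuous g := by
    have h1 : Continuous fun t => Real.sqrt (1 - s t ^ 2) :=
      ((continuous_const.sub (hsc.pow 2))).sqrt
    have h2 : g = fun t => s t / Real.sqrt (1 - s t ^ 2) := by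
      funext t; simp only [hg, hφinv]
    rw [h2]
    exact hsc.div h1 fun t => ne_of_gt (Real.sqrt_pos.mpr (hden t))
  have hueq : u = fun t => ∫ τ in (0 : ℝ)..t, g τ := funext hu
  have hderiv : ∀ t, HasDerivAt u (g t) t := by
    intro t
    rw [hueq]
    exact (hgc.integral_hasStrictDerivAt 0 t).hasDerivAt
  have hderiv' : ∀ t, deriv u t = g t := fun t => (hderiv t).deriv
  have hgpos : ∀ t, 0 < g t := by
    intro t
    simp only [hg, hφinv]
    exact div_pos (hs0 t) (Real.sqrt_pos.mpr (hden t))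
  -- part 2 key computation
  have hkey : ∀ t, g t / Real.sqrt (1 + g t ^ 2) = s t := by
    intro t
    have ha : (0:ℝ) < 1 - s t ^ 2 := hden t
    have hsa : (0:ℝ) < Real.sqrt (1 - s t ^ 2) := Real.sqrt_pos.mpr ha
    have hgt : g t = s t / Real.sqrt (1 - s t ^ 2) := by simp only [hg, hφinv]
    have hsq : Real.sqrt (1 - s t ^ 2) ^ 2 = 1 - s t ^ 2 := Real.sq_sqrt ha.le
    have h1 : 1 + g t ^ 2 = 1 / (1 - s t ^ 2) := by
      rw [hgt, div_pow, hsq]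
      field_simp
      ring
    have h2 : Real.sqrt (1 + g t ^ 2) = 1 / Real.sqrt (1 - s t ^ 2) := by
      rw [h1, one_div, Real.sqrt_inv, one_div]
    rw [h2, hgt]
    field_simp
  have part2 : ∀ t, deriv u t / Real.sqrt (1 + deriv u t ^ 2) = s t := by
    intro t; rw [hderiv']; exact hkey t
  refine ⟨fun t => ⟨hs1 t, hderiv t⟩, part2, ?_, ?_⟩
  · -- part 3
    intro t
    have hone : (fun x => ξ x ^ ((m : ℝ) - 1) *
        (deriv u x / Real.sqrt (1 + deriv u x ^ 2))) = fun _ => (1:ℝ) := by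
      funext x
      rw [part2 x, hs, ← Real.rpow_add (hξ0 x)]
      norm_num
    rw [hone]
    exact hasDerivAt_const t 1
  · -- part 4
    constructor
    · -- bounded → 3 ≤ m
      rintro ⟨B, hB⟩
      by_contra hlt
      push_neg at hlt
      interval_cases m
      -- m = 2
      · -- g t = 1 / sqrt (t^2+1) ≥ 1/(t+1) for t ≥ 0
        have hglb : ∀ τ : ℝ, 0 ≤ τ → 1 / (τ + 1) ≤ g τ := by
          intro τ hτ
          have hξτ : ξ τ = Real.sqrt (τ ^ 2 + 2) := hξ τ
          have hp2 : (0:ℝ) < τ ^ 2 + 2 := by positivity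
          have hp1 : (0:ℝ) < τ ^ 2 + 1 := by positivity
          have hsτ : s τ = (Real.sqrt (τ ^ 2 + 2))⁻¹ := by
            rw [hs]
            simp only
            rw [hξτ, show ((1:ℝ) - (2:ℕ)) = -1 by norm_num, Real.rpow_neg_one]
          have hsqs : Real.sqrt (τ ^ 2 + 2) ^ 2 = τ ^ 2 + 2 := Real.sq_sqrt hp2.le
          have hsp : (0:ℝ) < Real.sqrt (τ ^ 2 + 2) := Real.sqrt_pos.mpr hp2
          have h1s : 1 - s τ ^ 2 = (τ ^ 2 + 1) / (τ ^ 2 + 2) := by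
            rw [hsτ, inv_pow, hsqs]
            field_simp
            ring
          have hsp1 : (0:ℝ) < Real.sqrt (τ ^ 2 + 1) := Real.sqrt_pos.mpr hp1
          have hgτ : g τ = 1 / Real.sqrt (τ ^ 2 + 1) := by
            simp only [hg, hφinv]
            rw [h1s, hsτ, Real.sqrt_div hp1.le]
            field_simp
          have hcmp : Real.sqrt (τ ^ 2 + 1) ≤ τ + 1 := by
            rw [show τ + 1 = Real.sqrt ((τ + 1) ^ 2) from (Real.sqrt_sq (by linarith)).symm]
            exact Real.sqrt_le_sqrt (by nlinarith)
          rw [hgτ]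
          exact one_div_le_one_div_of_le hsp1 hcmp
        -- pick t = exp (B+1) - 1
        set t := Real.exp (B + 1) - 1 with ht
        have ht0 : 0 ≤ t := by
          have hB0 : 0 ≤ B := le_trans (abs_nonneg _) (hB 0)
          have := Real.add_one_le_exp (B + 1)
          linarith
        have hint : ∫ τ in (0:ℝ)..t, 1/(τ+1) = Real.log (t+1) := by
          have h0 : (0:ℝ) ∉ Set.uIcc (0+1 : ℝ) (t+1) := by
            rw [Set.mem_uIcc]; push_neg
            constructor <;> intro h <;> nlinarith
          have := intervalIntegral.integral_comp_add_right (a := 0) (b := t)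
            (fun x : ℝ => 1/x) 1
          rw [this]
          open intervalIntegral in rw [integral_one_div h0]
          norm_num
        have hle : ∫ τ in (0:ℝ)..t, 1/(τ+1) ≤ ∫ τ in (0:ℝ)..t, g τ := by
          apply intervalIntegral.integral_mono_on ht0
          · apply ContinuousOn.intervalIntegrable
            apply ContinuousOn.div continuousOn_const
            · exact (continuousOn_id.add continuousOn_const)
            · intro x hx
              rw [Set.uIcc_of_le ht0] at hx
              have := hx.1; intro h; nlinarith
          · exact hgc.intervalIntegrable 0 t
          · intro x hx
            exact hglb x hx.1
        have hBt := hB t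
        rw [hu t] at hBt
        have hut : Real.log (t + 1) ≤ ∫ τ in (0: ℝ)..t, g τ := hint ▸ hle
        have : Real.log (t + 1) = B + 1 := by
          rw [ht]; simp [Real.log_exp]
        rw [this] at hut
        have habs : (∫ τ in (0:ℝ)..t, g τ) ≤ B := le_trans (le_abs_self _) hBt
        linarith
    · -- 3 ≤ m → bounded
      intro h3
      refine ⟨Real.pi, ?_⟩
      intro t
      have hub : ∀ τ : ℝ, g τ ≤ 2 * (1 / (1 + τ ^ 2)) := by
        intro τ
        have hp2 : (0:ℝ) < τ ^ 2 + 2 := by positivity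
        have hm3 : (3:ℝ) ≤ m := by exact_mod_cast h3
        have hsle : s τ ≤ (τ ^ 2 + 2)⁻¹ := by
          have h1 : s τ ≤ ξ τ ^ (-2 : ℝ) :=
            Real.rpow_le_rpow_of_exponent_le (hξ1 τ).le (by linarith)
          have h2 : ξ τ ^ (-2 : ℝ) = (τ ^ 2 + 2)⁻¹ := by
            rw [show (-2 : ℝ) = ((-2 : ℤ) : ℝ) by norm_num, Real.rpow_intCast,
              zpow_neg, zpow_two, ← sq, hξ τ, Real.sq_sqrt hp2.le]
          rw [h2] at h1; exact h1
        have hs12 : s τ ≤ 1 / 2 := by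
          refine hsle.trans ?_
          rw [inv_le_comm₀ (by positivity) (by norm_num)]
          nlinarith
        have hd14 : (1:ℝ)/2 ≤ Real.sqrt (1 - s τ ^ 2) := by
          have h1 : (1:ℝ)/4 ≤ 1 - s τ ^ 2 := by nlinarith [hs0 τ]
          calc (1:ℝ)/2 = Real.sqrt (1/4) := by
                rw [show (1/4:ℝ) = (1/2)^2 by norm_num, Real.sqrt_sq (by norm_num)]
          _ ≤ Real.sqrt (1 - s τ ^ 2) := Real.sqrt_le_sqrt h1
        have hd0 : (0:ℝ) < Real.sqrt (1 - s τ ^ 2) := lt_of_lt_of_le (by norm_num) hd14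
        have h1 : g τ ≤ 2 * s τ := by
          simp only [hg, hφinv]
          rw [div_le_iff₀ hd0]
          nlinarith [hs0 τ]
        have h2 : (τ ^ 2 + 2)⁻¹ ≤ 1 / (1 + τ ^ 2) := by
          rw [inv_eq_one_div]
          apply one_div_le_one_div_of_le (by positivity)
          linarith
        calc g τ ≤ 2 * s τ := h1
        _ ≤ 2 * (τ ^ 2 + 2)⁻¹ := by linarith
        _ ≤ 2 * (1 / (1 + τ ^ 2)) := by linarith
      have hbc : Continuous fun τ : ℝ => 2 * (1 / (1 + τ ^ 2)) :=
        continuous_const.mul (continuous_const.div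
          (continuous_const.add (continuous_pow 2)) (fun x => by positivity))
      have hintle : ∀ a b : ℝ, a ≤ b →
          (∫ τ in a..b, g τ) ≤ 2 * (Real.arctan b - Real.arctan a) := by
        intro a b hab
        have h1 : (∫ τ in a..b, g τ) ≤ ∫ τ in a..b, 2 * (1 / (1 + τ ^ 2)) := by
          apply intervalIntegral.integral_mono_on hab
            (hgc.intervalIntegrable a b) (hbc.intervalIntegrable a b)
          intro x _; exact hub x
        have h2 : (∫ τ in a..b, 2 * (1 / (1 + τ ^ 2)))
            = 2 * (Real.arctan b - Real.arctan a) := by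
          rw [intervalIntegral.integral_const_mul]
          congr 1
          exact integral_one_div_one_add_sq
        rw [h2] at h1; exact h1
      have hπ : ∀ x : ℝ, |Real.arctan x| ≤ Real.pi / 2 :=
        fun x => (abs_le.mpr ⟨(Real.neg_pi_div_two_lt_arctan x).le,
          (Real.arctan_lt_pi_div_two x).le⟩)
      rcases le_total 0 t with ht0 | ht0
      · have hnn : 0 ≤ u t := by
          rw [hu t]
          exact intervalIntegral.integral_nonneg ht0 (fun x _ => (hgpos x).le)
        rw [abs_of_nonneg hnn, hu t]
        have := hintle 0 t ht0
        have ha0 := hπ t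
        rw [Real.arctan_zero] at this
        rw [abs_le] at ha0
        linarith [Real.pi_pos, ha0.2]
      · have hsym : u t = -(∫ τ in t..(0:ℝ), g τ) := by
          rw [hu t, intervalIntegral.integral_symm]
        have hnn : 0 ≤ ∫ τ in t..(0:ℝ), g τ :=
          intervalIntegral.integral_nonneg ht0 (fun x _ => (hgpos x).le)
        rw [hsym, abs_neg, abs_of_nonneg hnn]
        have := hintle t 0 ht0
        have ha0 := hπ t
        rw [Real.arctan_zero] at this
        rw [abs_le] at ha0
        linarith [Real.pi_pos, ha0.1]
end
end

section
/- Let g ∈ C^∞([0,∞)) solve g'' = κ²(1+r²)^{α/2} g with g(0) = 0, g'(0) = 1, where κ > 0 and α ≥ −2. If α > −2, then log g(r)/r^{1+α/2} → 2κ/(2+α) as r → ∞; if α = −2, then log g(r)/log r → κ̄ as r → ∞, where κ̄ = (1+√(1+4κ²))/2. -/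
noncomputable section

open Filter Set Real

lemma mono_of_deriv {f f' : ℝ → ℝ} {a b : ℝ} (hab : a ≤ b)
    (hf : ∀ r ∈ Set.Icc a b, HasDerivAt f (f' r) r)
    (h0 : ∀ r ∈ Set.Ioo a b, 0 ≤ f' r) : f a ≤ f b := by
  have hm : MonotoneOn f (Set.Icc a b) := by
    apply monotoneOn_of_hasDerivWithinAt_nonneg (convex_Icc a b)
      (fun r hr => (hf r hr).continuousAt.continuousWithinAt)
      (f' := f')
    · intro x hx
      rw [interior_Icc] at hx
      exact ((hf x (Set.Ioo_subset_Icc_self hx)).hasDerivWithinAt)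
    · intro x hx
      rw [interior_Icc] at hx
      exact h0 x hx
  exact hm (Set.left_mem_Icc.2 hab) (Set.right_mem_Icc.2 hab) hab

lemma riccati_compare {φ ψ φd ψd : ℝ → ℝ} {a b : ℝ} (hab : a ≤ b)
    (hφ : ∀ r ∈ Set.Icc a b, HasDerivAt φ (φd r) r)
    (hψ : ∀ r ∈ Set.Icc a b, HasDerivAt ψ (ψd r) r)
    (hineq : ∀ r ∈ Set.Icc a b, ψd r + ψ r ^ 2 ≤ φd r + φ r ^ 2)
    (hpos : ∀ r ∈ Set.Icc a b, 0 ≤ φ r + ψ r)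
    (hbase : ψ a ≤ φ a) : ψ b ≤ φ b := by
  by_contra hb
  push_neg at hb
  set w : ℝ → ℝ := fun r => φ r - ψ r with hw
  have hwc : ContinuousOn w (Set.Icc a b) := fun r hr =>
    (((hφ r hr).sub (hψ r hr)).continuousAt).continuousWithinAt
  set S : Set ℝ := Set.Icc a b ∩ w ⁻¹' (Set.Ici 0) with hS
  have hSne : S.Nonempty := ⟨a, Set.left_mem_Icc.2 hab, by simpa [hw] using hbase⟩
  have hSc : IsClosed S := hwc.preimage_isClosed_of_isClosed isClosed_Icc isClosed_Ici
  have hScomp : IsCompact S :=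
    (isCompact_Icc).of_isClosed_subset hSc Set.inter_subset_left
  set s := sSup S with hs
  have hsS : s ∈ S := hScomp.sSup_mem hSne
  have hsab : s ∈ Set.Icc a b := hsS.1
  have hws : 0 ≤ w s := hsS.2
  have hsb : s ≤ b := hsab.2
  have hwneg : ∀ t ∈ Set.Ioc s b, w t < 0 := by
    intro t ht
    by_contra hwt
    push_neg at hwt
    have : t ∈ S := ⟨⟨hsab.1.trans ht.1.le, ht.2⟩, hwt⟩
    have hbdd : BddAbove S := BddAbove.mono Set.inter_subset_left bddAbove_Icc
    exact absurd (le_csSup hbdd this) (not_le.2 ht.1)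
  have hwb : 0 ≤ w b := by
    have := mono_of_deriv (f := w) (f' := fun r => φd r - ψd r) hsb
      (fun r hr => (hφ r ⟨hsab.1.trans hr.1, hr.2⟩).sub (hψ r ⟨hsab.1.trans hr.1, hr.2⟩))
      (by
        intro r hr
        have hrab : r ∈ Set.Icc a b := ⟨hsab.1.trans hr.1.le, hr.2.le⟩
        have h1 : ψ r ^ 2 - φ r ^ 2 ≤ φd r - ψd r := by nlinarith [hineq r hrab]
        have h2 : w r < 0 := hwneg r ⟨hr.1, hr.2.le⟩
        have h3 : 0 ≤ φ r + ψ r := hpos r hrab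
        have h2' : 0 < ψ r - φ r := by simp only [hw] at h2; linarith
        have h4 : 0 ≤ (ψ r - φ r) * (φ r + ψ r) := mul_nonneg h2'.le h3
        show 0 ≤ φd r - ψd r
        nlinarith [h1, h4])
    linarith [hws, this, sub_neg.2 hb]
  simp only [hw] at hwb
  linarith

lemma q_split {α r : ℝ} (hr : 0 < r) :
    (1 + r ^ 2) ^ (α / 2) = (1 + (r ^ 2)⁻¹) ^ (α / 2) * r ^ α := by
  have h2 : (0:ℝ) < r ^ 2 := by positivity
  have h1 : (1:ℝ) + r ^ 2 = (1 + (r ^ 2)⁻¹) * r ^ 2 := by field_simp; ring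
  have hnn : (0:ℝ) ≤ 1 + (r ^ 2)⁻¹ := by positivity
  rw [h1, Real.mul_rpow hnn (le_of_lt h2)]
  congr 1
  rw [← Real.rpow_natCast r 2, ← Real.rpow_mul hr.le]
  norm_num
  ring_nf

lemma ratio_tendsto (α : ℝ) :
    Filter.Tendsto (fun r : ℝ => (1 + (r ^ 2)⁻¹) ^ (α / 2)) atTop (nhds 1) := by
  have h1 : Filter.Tendsto (fun r : ℝ => 1 + (r ^ 2)⁻¹) atTop (nhds 1) := by
    have := (tendsto_pow_atTop (n := 2) (by norm_num)).inv_tendsto_atTop (𝕜 := ℝ)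
    simpa using tendsto_const_nhds.add this
  have h2 : ContinuousAt (fun x : ℝ => x ^ (α / 2)) 1 :=
    Real.continuousAt_rpow_const 1 (α / 2) (Or.inl one_ne_zero)
  have := h2.tendsto.comp h1
  simpa [Function.comp_def] using this

lemma q_upper {α K : ℝ} (hK : 1 < K) :
    ∀ᶠ r : ℝ in atTop, (1 + r ^ 2) ^ (α / 2) ≤ K * r ^ α := by
  filter_upwards [(ratio_tendsto α).eventually_le_const hK,
    eventually_gt_atTop (0:ℝ)] with r h1 hr
  rw [q_split (α := α) hr]
  exact mul_le_mul_of_nonneg_right h1 (Real.rpow_nonneg hr.le α)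

lemma q_lower {α K : ℝ} (hK : K < 1) :
    ∀ᶠ r : ℝ in atTop, K * r ^ α ≤ (1 + r ^ 2) ^ (α / 2) := by
  filter_upwards [(ratio_tendsto α).eventually_const_le hK,
    eventually_gt_atTop (0:ℝ)] with r h1 hr
  rw [q_split (α := α) hr]
  exact mul_le_mul_of_nonneg_right h1 (Real.rpow_nonneg hr.le α)

lemma rpow_half_sq {r γ : ℝ} (hr : 0 < r) : (r ^ (γ / 2)) ^ 2 = r ^ γ := by
  rw [sq, ← Real.rpow_add hr]
  congr 1
  ring

lemma cross_upper {α c ρ : ℝ} {q h : ℝ → ℝ} (hc : 0 < c) (hρ0 : 0 ≤ ρ) (hρ1 : ρ < 1)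
    (hh : ∀ r : ℝ, 0 < r → HasDerivAt h (q r - h r ^ 2) r)
    (hhpos : ∀ r : ℝ, 0 < r → 0 < h r)
    (hq : ∀ᶠ r : ℝ in atTop, q r ≤ ρ * (c ^ 2 * r ^ α))
    (hdiv : Filter.Tendsto (fun R : ℝ => c * (1 - ρ) * R - R ^ (-(α / 2))) atTop atTop) :
    ∃ᶠ r : ℝ in atTop, h r ≤ c * r ^ (α / 2) := by
  by_contra hcon
  rw [Filter.not_frequently] at hcon
  replace hcon : ∀ᶠ r : ℝ in atTop, c * r ^ (α / 2) < h r :=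
    hcon.mono fun r hr => not_le.1 hr
  obtain ⟨N, hN⟩ := Filter.eventually_atTop.1 (hq.and hcon)
  set r₀ : ℝ := max N 1 with hr₀
  have hr₀1 : (1:ℝ) ≤ r₀ := le_max_right _ _
  have hr₀0 : (0:ℝ) < r₀ := lt_of_lt_of_le one_pos hr₀1
  have key : ∀ R : ℝ, r₀ ≤ R → c * (1 - ρ) * R - R ^ (-(α / 2)) ≤ c * (1 - ρ) * r₀ := by
    intro R hR
    have hfacts : ∀ r : ℝ, r₀ ≤ r → 0 < r ∧ q r ≤ ρ * (c ^ 2 * r ^ α) ∧ c * r ^ (α / 2) < h r := by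
      intro r hr
      refine ⟨lt_of_lt_of_le hr₀0 hr, (hN r (le_trans (le_max_left _ _) hr)).1,
        (hN r (le_trans (le_max_left _ _) hr)).2⟩
    have hmono := mono_of_deriv (a := r₀) (b := R) hR
      (f := fun r => (h r)⁻¹ - (1 - ρ) * r)
      (f' := fun r => -(q r - h r ^ 2) / h r ^ 2 - (1 - ρ))
      (fun r hr => by
        obtain ⟨hrpos, _, _⟩ := hfacts r hr.1
        have h1 : HasDerivAt (fun y => (h y)⁻¹) (-(q r - h r ^ 2) / h r ^ 2) r :=
          (hh r hrpos).inv (ne_of_gt (hhpos r hrpos))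
        have h2 : HasDerivAt (fun y : ℝ => (1 - ρ) * y) (1 - ρ) r := by
          simpa using (hasDerivAt_id r).const_mul (1 - ρ)
        exact h1.sub h2)
      (by
        intro r hr
        obtain ⟨hrpos, hq1, hcr⟩ := hfacts r hr.1.le
        have hhr : 0 < h r := hhpos r hrpos
        have hcrle : c * r ^ (α / 2) ≤ h r := hcr.le
        have hsq : (c * r ^ (α / 2)) ^ 2 = c ^ 2 * r ^ α := by
          rw [mul_pow, rpow_half_sq hrpos]
        have hqh : q r ≤ ρ * h r ^ 2 := by
          refine hq1.trans ?_
          rw [← hsq]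
          have : (c * r ^ (α / 2)) ^ 2 ≤ h r ^ 2 := by
            apply pow_le_pow_left₀ (by positivity) hcrle
          exact mul_le_mul_of_nonneg_left this hρ0
        show (0:ℝ) ≤ -(q r - h r ^ 2) / h r ^ 2 - (1 - ρ)
        have hd : 1 - ρ ≤ -(q r - h r ^ 2) / h r ^ 2 := by
          rw [le_div_iff₀ (by positivity)]
          nlinarith
        linarith)
    obtain ⟨hRpos, _, hcR⟩ := hfacts R hR
    have hhR : 0 < h R := hhpos R hRpos
    have hcRpos : 0 < c * R ^ (α / 2) := by positivity
    have hinvR : (h R)⁻¹ ≤ (c * R ^ (α / 2))⁻¹ := by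
      apply inv_anti₀ hcRpos hcR.le
    have hinv0 : 0 < (h r₀)⁻¹ := by
      exact inv_pos.2 (hhpos r₀ hr₀0)
    have hrw : (c * R ^ (α / 2))⁻¹ = c⁻¹ * R ^ (-(α / 2)) := by
      rw [mul_inv, ← Real.rpow_neg hRpos.le]
    have h5 : (1 - ρ) * (R - r₀) ≤ c⁻¹ * R ^ (-(α / 2)) := by
      have h4 := hinvR.trans (le_of_eq hrw)
      nlinarith [hmono, hinv0, h4]
    have h6 : c * ((1 - ρ) * (R - r₀)) ≤ c * (c⁻¹ * R ^ (-(α / 2))) :=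
      mul_le_mul_of_nonneg_left h5 hc.le
    have h7 : c * (c⁻¹ * R ^ (-(α / 2))) = R ^ (-(α / 2)) := by
      field_simp
    rw [h7] at h6
    nlinarith [h6]
  obtain ⟨R, hR1, hR2⟩ := ((hdiv.eventually_gt_atTop (c * (1 - ρ) * r₀)).and
    (eventually_ge_atTop r₀)).exists
  exact absurd (key R hR2) (not_le.2 hR1)

lemma cross_lower {α c δ : ℝ} {q h : ℝ → ℝ} (hα : -2 ≤ α) (hc : 0 < c) (hδ : 0 < δ)
    (hh : ∀ r : ℝ, 0 < r → HasDerivAt h (q r - h r ^ 2) r)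
    (hhpos : ∀ r : ℝ, 0 < r → 0 < h r)
    (hbr : ∀ᶠ r : ℝ in atTop, ∀ x ∈ Set.Icc (0:ℝ) c,
      δ ≤ q r * r ^ (-α) - x ^ 2 - (α / 2) * x * r ^ (-(1 + α / 2))) :
    ∃ᶠ r : ℝ in atTop, c * r ^ (α / 2) ≤ h r := by
  by_contra hcon
  rw [Filter.not_frequently] at hcon
  replace hcon : ∀ᶠ r : ℝ in atTop, h r < c * r ^ (α / 2) :=
    hcon.mono fun r hr => not_le.1 hr
  obtain ⟨N, hN⟩ := Filter.eventually_atTop.1 (hbr.and hcon)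
  set r₂ : ℝ := max N 1 with hr₂
  have hr₂1 : (1:ℝ) ≤ r₂ := le_max_right _ _
  have hr₂0 : (0:ℝ) < r₂ := lt_of_lt_of_le one_pos hr₂1
  set v : ℝ → ℝ := fun r => h r * r ^ (-(α / 2)) with hv
  set Vd : ℝ → ℝ := fun r =>
    (q r - h r ^ 2) * r ^ (-(α / 2)) + h r * (-(α / 2) * r ^ (-(α / 2) - 1)) with hVd
  have hfacts : ∀ r : ℝ, r₂ ≤ r → 0 < r ∧ 0 < h r ∧ 0 ≤ v r ∧ v r < c := by
    intro r hr
    have hrpos : 0 < r := lt_of_lt_of_le hr₂0 hr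
    have hhr := hhpos r hrpos
    have hrp : (0:ℝ) < r ^ (-(α / 2)) := Real.rpow_pos_of_pos hrpos _
    have hlt := (hN r (le_trans (le_max_left _ _) hr)).2
    refine ⟨hrpos, hhr, by positivity, ?_⟩
    have : h r * r ^ (-(α / 2)) < c * r ^ (α / 2) * r ^ (-(α / 2)) :=
      mul_lt_mul_of_pos_right hlt hrp
    calc v r < c * r ^ (α / 2) * r ^ (-(α / 2)) := this
      _ = c * r ^ (α / 2 + -(α / 2)) := by rw [mul_assoc, ← Real.rpow_add hrpos]
      _ = c := by norm_num
  have hVder : ∀ r : ℝ, 0 < r → HasDerivAt v (Vd r) r := by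
    intro r hrpos
    have h1 : HasDerivAt (fun y : ℝ => y ^ (-(α / 2))) (-(α / 2) * r ^ (-(α / 2) - 1)) r :=
      Real.hasDerivAt_rpow_const (Or.inl (ne_of_gt hrpos))
    exact (hh r hrpos).mul h1
  have hVd_ge : ∀ r : ℝ, r₂ ≤ r → δ * r⁻¹ ≤ Vd r := by
    intro r hr
    obtain ⟨hrpos, hhr, hv0, hvc⟩ := hfacts r hr
    have hbrr := (hN r (le_trans (le_max_left _ _) hr)).1 (v r) ⟨hv0, hvc.le⟩
    have hmul := mul_le_mul_of_nonneg_right hbrr (Real.rpow_nonneg hrpos.le (α / 2))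
    have e1 : r ^ (-α) * r ^ (α / 2) = r ^ (-(α / 2)) := by
      rw [← Real.rpow_add hrpos]; congr 1; ring
    have e2 : (r ^ (-(α / 2))) ^ 2 = r ^ (-α) := by
      rw [sq, ← Real.rpow_add hrpos]; congr 1; ring
    have e3 : r ^ (-(α / 2)) * (r ^ (-(1 + α / 2)) * r ^ (α / 2)) = r ^ (-(α / 2) - 1) := by
      rw [← Real.rpow_add hrpos, ← Real.rpow_add hrpos]; congr 1; ring
    have ekey : (q r * r ^ (-α) - v r ^ 2 - α / 2 * v r * r ^ (-(1 + α / 2))) * r ^ (α / 2)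
        = Vd r := by
      simp only [hv, hVd]
      have : (q r * r ^ (-α) - (h r * r ^ (-(α / 2))) ^ 2
          - α / 2 * (h r * r ^ (-(α / 2))) * r ^ (-(1 + α / 2))) * r ^ (α / 2)
          = q r * (r ^ (-α) * r ^ (α / 2)) - h r ^ 2 * ((r ^ (-(α / 2))) ^ 2 * r ^ (α / 2))
            - α / 2 * h r * (r ^ (-(α / 2)) * (r ^ (-(1 + α / 2)) * r ^ (α / 2))) := by ring
      rw [this, e1, e2, e1, e3]
      ring
    have h4 : δ * r ^ (α / 2) ≤ Vd r := by rw [← ekey]; exact hmul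
    refine le_trans ?_ h4
    have h5 : r ^ (-1 : ℝ) ≤ r ^ (α / 2) :=
      Real.rpow_le_rpow_of_exponent_le (le_trans hr₂1 hr) (by linarith)
    rw [Real.rpow_neg_one] at h5
    exact mul_le_mul_of_nonneg_left h5 hδ.le
  set R : ℝ := r₂ * Real.exp ((c + 1) / δ) with hR
  have hRr₂ : r₂ ≤ R := by
    nlinarith [Real.one_le_exp (show (0:ℝ) ≤ (c + 1) / δ by positivity), hr₂0]
  have hmono := mono_of_deriv (a := r₂) (b := R) hRr₂
    (f := fun r => v r - δ * Real.log r)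
    (f' := fun r => Vd r - δ * r⁻¹)
    (fun r hrI => by
      have hrpos : 0 < r := lt_of_lt_of_le hr₂0 hrI.1
      exact (hVder r hrpos).sub ((Real.hasDerivAt_log (ne_of_gt hrpos)).const_mul δ))
    (fun r hrI => by
      have := hVd_ge r hrI.1.le
      show (0:ℝ) ≤ Vd r - δ * r⁻¹
      linarith)
  have hlogR : Real.log R = Real.log r₂ + (c + 1) / δ := by
    rw [hR, Real.log_mul (ne_of_gt hr₂0) (Real.exp_ne_zero _), Real.log_exp]
  obtain ⟨_, _, hv2, _⟩ := hfacts r₂ le_rfl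
  obtain ⟨_, _, _, hvRc⟩ := hfacts R hRr₂
  rw [hlogR] at hmono
  have : δ * ((c + 1) / δ) = c + 1 := by field_simp
  nlinarith [hmono, hv2, hvRc]

lemma barrier_upper {q h p pd : ℝ → ℝ}
    (hh : ∀ r : ℝ, 0 < r → HasDerivAt h (q r - h r ^ 2) r)
    (hhpos : ∀ r : ℝ, 0 < r → 0 < h r)
    (hp : ∀ r : ℝ, 0 < r → HasDerivAt p (pd r) r)
    (hppos : ∀ r : ℝ, 0 < r → 0 ≤ p r)
    (hsuper : ∀ᶠ r : ℝ in atTop, q r ≤ pd r + p r ^ 2)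
    (hfreq : ∃ᶠ r : ℝ in atTop, h r ≤ p r) :
    ∀ᶠ r : ℝ in atTop, h r ≤ p r := by
  obtain ⟨N, hN⟩ := Filter.eventually_atTop.1 hsuper
  obtain ⟨r₁, hr₁, hbase⟩ := (hfreq.and_eventually (eventually_ge_atTop (max N 1))).exists
  rw [Filter.eventually_atTop]
  refine ⟨r₁, fun R hR => ?_⟩
  have hr₁0 : (0:ℝ) < r₁ := lt_of_lt_of_le one_pos (le_trans (le_max_right _ _) hbase)
  have hmem : ∀ r ∈ Set.Icc r₁ R, 0 < r := fun r hr => lt_of_lt_of_le hr₁0 hr.1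
  exact riccati_compare (φ := p) (ψ := h) (φd := pd) (ψd := fun r => q r - h r ^ 2) hR
    (fun r hrm => hp r (hmem r hrm))
    (fun r hrm => hh r (hmem r hrm))
    (fun r hrm => by
      have := hN r (le_trans (le_max_left N 1) (le_trans hbase hrm.1))
      show q r - h r ^ 2 + h r ^ 2 ≤ pd r + p r ^ 2
      linarith)
    (fun r hrm => by
      have h1 := hhpos r (hmem r hrm)
      have h2 := hppos r (hmem r hrm)
      linarith)
    hr₁

lemma barrier_lower {q h p pd : ℝ → ℝ}
    (hh : ∀ r : ℝ, 0 < r → HasDerivAt h (q r - h r ^ 2) r)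
    (hhpos : ∀ r : ℝ, 0 < r → 0 < h r)
    (hp : ∀ r : ℝ, 0 < r → HasDerivAt p (pd r) r)
    (hppos : ∀ r : ℝ, 0 < r → 0 ≤ p r)
    (hsub : ∀ᶠ r : ℝ in atTop, pd r + p r ^ 2 ≤ q r)
    (hfreq : ∃ᶠ r : ℝ in atTop, p r ≤ h r) :
    ∀ᶠ r : ℝ in atTop, p r ≤ h r := by
  obtain ⟨N, hN⟩ := Filter.eventually_atTop.1 hsub
  obtain ⟨r₁, hr₁, hbase⟩ := (hfreq.and_eventually (eventually_ge_atTop (max N 1))).exists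
  rw [Filter.eventually_atTop]
  refine ⟨r₁, fun R hR => ?_⟩
  have hr₁0 : (0:ℝ) < r₁ := lt_of_lt_of_le one_pos (le_trans (le_max_right _ _) hbase)
  have hmem : ∀ r ∈ Set.Icc r₁ R, 0 < r := fun r hr => lt_of_lt_of_le hr₁0 hr.1
  exact riccati_compare (φ := h) (ψ := p) (φd := fun r => q r - h r ^ 2) (ψd := pd) hR
    (fun r hrm => hh r (hmem r hrm))
    (fun r hrm => hp r (hmem r hrm))
    (fun r hrm => by
      have := hN r (le_trans (le_max_left N 1) (le_trans hbase hrm.1))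
      show pd r + p r ^ 2 ≤ q r - h r ^ 2 + h r ^ 2
      linarith)
    (fun r hrm => by
      have h1 := hhpos r (hmem r hrm)
      have h2 := hppos r (hmem r hrm)
      linarith)
    hr₁

lemma g_positivity (κ α : ℝ) (g g' : ℝ → ℝ)
    (hg : ∀ r, 0 ≤ r → HasDerivAt g (g' r) r)
    (hg' : ∀ r, 0 ≤ r → HasDerivAt g' (κ ^ 2 * (1 + r ^ 2) ^ (α / 2) * g r) r)
    (hg0 : g 0 = 0) (hg'0 : g' 0 = 1) :
    (∀ r : ℝ, 0 < r → 0 < g r) ∧ (∀ r : ℝ, 0 ≤ r → 1 ≤ g' r) := by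
  -- g is positive just to the right of 0
  have hslope : Filter.Tendsto (slope g 0) (nhdsWithin 0 {0}ᶜ) (nhds 1) := by
    have := hasDerivAt_iff_tendsto_slope.1 (hg 0 le_rfl)
    rwa [hg'0] at this
  have hslope' : Filter.Tendsto (slope g 0) (nhdsWithin 0 (Set.Ioi 0)) (nhds 1) :=
    hslope.mono_left (nhdsWithin_mono 0 (fun x hx => ne_of_gt hx))
  have hev : ∀ᶠ r in nhdsWithin 0 (Set.Ioi 0), (1:ℝ)/2 < slope g 0 r :=
    hslope'.eventually_const_lt (by norm_num)
  obtain ⟨u, hu, husub⟩ := mem_nhdsGT_iff_exists_Ioo_subset.1 hev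
  have hu0 : (0:ℝ) < u := hu
  have hsmall : ∀ r : ℝ, r ∈ Set.Ioo 0 u → 0 < g r := by
    intro r hr
    have h1 : (1:ℝ)/2 < slope g 0 r := husub hr
    rw [slope_def_field] at h1
    simp only [hg0, sub_zero] at h1
    have : (1:ℝ)/2 * r < g r := by
      rw [lt_div_iff₀ hr.1] at h1
      linarith
    nlinarith [hr.1]
  -- main positivity claim
  have hqpos : ∀ r : ℝ, (0:ℝ) ≤ κ ^ 2 * (1 + r ^ 2) ^ (α / 2) := by
    intro r
    have : (0:ℝ) < 1 + r ^ 2 := by positivity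
    positivity
  have hmain : ∀ b : ℝ, 0 < b → 0 < g b := by
    intro b hb
    by_contra hgb
    push_neg at hgb
    have hub : u ≤ b := by
      by_contra hub
      push_neg at hub
      exact absurd (hsmall b ⟨hb, hub⟩) (not_lt.2 hgb)
    set Z : Set ℝ := Set.Icc (u/2) b ∩ g ⁻¹' (Set.Iic 0) with hZ
    have hgc : ContinuousOn g (Set.Icc (u/2) b) := fun r hr =>
      (hg r (le_trans (by positivity) hr.1)).continuousAt.continuousWithinAt
    have hZc : IsClosed Z := hgc.preimage_isClosed_of_isClosed isClosed_Icc isClosed_Iic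
    have hZne : Z.Nonempty := ⟨b, ⟨by linarith, le_rfl⟩, hgb⟩
    have hZcomp : IsCompact Z := (isCompact_Icc).of_isClosed_subset hZc Set.inter_subset_left
    set m := sInf Z with hm
    have hmZ : m ∈ Z := hZcomp.sInf_mem hZne
    have hm0 : 0 < m := lt_of_lt_of_le (by positivity) hmZ.1.1
    have hgm : g m ≤ 0 := hmZ.2
    have hposbelow : ∀ t : ℝ, t ∈ Set.Ioo 0 m → 0 < g t := by
      intro t ht
      rcases lt_or_ge t u with htu | htu
      · exact hsmall t ⟨ht.1, htu⟩
      · by_contra hgt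
        push_neg at hgt
        have htZ : t ∈ Z := ⟨⟨by linarith, le_trans ht.2.le hmZ.1.2⟩, hgt⟩
        have : m ≤ t := csInf_le (hZcomp.bddBelow) htZ
        exact absurd ht.2 (not_lt.2 this)
    have hg'mono : ∀ t ∈ Set.Icc (0:ℝ) m, 1 ≤ g' t := by
      intro t ht
      have hmono : MonotoneOn g' (Set.Icc 0 m) := by
        apply monotoneOn_of_hasDerivWithinAt_nonneg (convex_Icc 0 m)
          (f' := fun r => κ ^ 2 * (1 + r ^ 2) ^ (α / 2) * g r)
        · exact fun r hr => (hg' r hr.1).continuousAt.continuousWithinAt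
        · intro x hx
          rw [interior_Icc] at hx
          exact (hg' x hx.1.le).hasDerivWithinAt
        · intro x hx
          rw [interior_Icc] at hx
          exact mul_nonneg (hqpos x) (hposbelow x hx).le
      have := hmono (Set.left_mem_Icc.2 hm0.le) ht ht.1
      rwa [hg'0] at this
    have hgem : m ≤ g m := by
      have := mono_of_deriv (a := 0) (b := m) hm0.le
        (f := fun r => g r - r) (f' := fun r => g' r - 1)
        (fun r hr => (hg r hr.1).sub (hasDerivAt_id r))
        (fun r hr => by
          have := hg'mono r ⟨hr.1.le, hr.2.le⟩
          show (0:ℝ) ≤ g' r - 1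
          linarith)
      simp only [hg0] at this
      linarith
    linarith
  refine ⟨hmain, fun r hr => ?_⟩
  rcases eq_or_lt_of_le hr with hr0 | hr0
  · rw [← hr0, hg'0]
  · have hmono : MonotoneOn g' (Set.Icc 0 r) := by
      apply monotoneOn_of_hasDerivWithinAt_nonneg (convex_Icc 0 r)
        (f' := fun s => κ ^ 2 * (1 + s ^ 2) ^ (α / 2) * g s)
      · exact fun s hs => (hg' s hs.1).continuousAt.continuousWithinAt
      · intro x hx
        rw [interior_Icc] at hx
        exact (hg' x hx.1.le).hasDerivWithinAt
      · intro x hx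
        rw [interior_Icc] at hx
        exact mul_nonneg (hqpos x) (hmain x hx.1).le
    have := hmono (Set.left_mem_Icc.2 hr) (Set.right_mem_Icc.2 hr) hr
    rwa [hg'0] at this

lemma ev_tail {α : ℝ} (hα : -2 < α) (C ε₀ : ℝ) (hε : 0 < ε₀) :
    ∀ᶠ r : ℝ in atTop, C * r ^ (α / 2 - 1) ≤ ε₀ * r ^ α := by
  have hβ : (0:ℝ) < 1 + α / 2 := by linarith
  have hten : Filter.Tendsto (fun r : ℝ => |C| * r ^ (-(1 + α / 2))) atTop (nhds 0) := by
    simpa using (tendsto_rpow_neg_atTop hβ).const_mul |C|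
  filter_upwards [hten.eventually_le_const hε, eventually_gt_atTop (0:ℝ)] with r h1 hr
  have e1 : r ^ (α / 2 - 1) = r ^ (-(1 + α / 2)) * r ^ α := by
    rw [← Real.rpow_add hr]; congr 1; ring
  have h2 : C * r ^ (α / 2 - 1) ≤ |C| * r ^ (α / 2 - 1) :=
    mul_le_mul_of_nonneg_right (le_abs_self C) (Real.rpow_nonneg hr.le _)
  calc C * r ^ (α / 2 - 1) ≤ |C| * r ^ (α / 2 - 1) := h2
    _ = |C| * r ^ (-(1 + α / 2)) * r ^ α := by rw [e1]; ring
    _ ≤ ε₀ * r ^ α := mul_le_mul_of_nonneg_right h1 (Real.rpow_nonneg hr.le _)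

lemma hbound_upper_A {κ α c : ℝ} {h : ℝ → ℝ} (hκ : 0 < κ) (hα : -2 < α) (hc : κ < c)
    (hh : ∀ r : ℝ, 0 < r → HasDerivAt h (κ ^ 2 * (1 + r ^ 2) ^ (α / 2) - h r ^ 2) r)
    (hhpos : ∀ r : ℝ, 0 < r → 0 < h r) :
    ∀ᶠ r : ℝ in atTop, h r ≤ c * r ^ (α / 2) := by
  have hc0 : 0 < c := hκ.trans hc
  have hκ2c2 : κ ^ 2 < c ^ 2 := by nlinarith
  apply barrier_upper (q := fun r => κ ^ 2 * (1 + r ^ 2) ^ (α / 2))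
    (pd := fun r => c * (α / 2 * r ^ (α / 2 - 1))) hh hhpos
  · intro r hr
    exact (Real.hasDerivAt_rpow_const (Or.inl (ne_of_gt hr))).const_mul c
  · intro r hr
    positivity
  · -- supersolution
    set ε₀ : ℝ := (c ^ 2 - κ ^ 2) / 2 with hε₀
    have hε₀pos : 0 < ε₀ := by simp only [hε₀]; linarith
    have hK : (1:ℝ) < (κ ^ 2 + c ^ 2) / (2 * κ ^ 2) := by
      rw [lt_div_iff₀ (by positivity)]; nlinarith
    filter_upwards [q_upper (α := α) hK, ev_tail hα (-(c * (α / 2))) ε₀ hε₀pos,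
      eventually_gt_atTop (0:ℝ)] with r h1 h2 hr
    have hsq : (c * r ^ (α / 2)) ^ 2 = c ^ 2 * r ^ α := by
      rw [mul_pow, rpow_half_sq hr]
    rw [hsq]
    have h3 : κ ^ 2 * (1 + r ^ 2) ^ (α / 2) ≤ (κ ^ 2 + c ^ 2) / 2 * r ^ α := by
      have := mul_le_mul_of_nonneg_left h1 (le_of_lt (show (0:ℝ) < κ ^ 2 by positivity))
      calc κ ^ 2 * (1 + r ^ 2) ^ (α / 2) ≤ κ ^ 2 * ((κ ^ 2 + c ^ 2) / (2 * κ ^ 2) * r ^ α) := this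
        _ = (κ ^ 2 + c ^ 2) / 2 * r ^ α := by field_simp
    nlinarith [h2, h3, hε₀]
  · -- frequent crossing
    set ρ : ℝ := (κ ^ 2 / c ^ 2 + 1) / 2 with hρ
    have hρ0 : 0 ≤ ρ := by positivity
    have hρ1 : ρ < 1 := by
      have : κ ^ 2 / c ^ 2 < 1 := by rw [div_lt_one (by positivity)]; exact hκ2c2
      simp only [hρ]; linarith
    apply cross_upper hc0 hρ0 hρ1 hh hhpos
    · have hrc : ρ * c ^ 2 = (κ ^ 2 + c ^ 2) / 2 := by
        rw [hρ]
        field_simp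
      have hK : (1:ℝ) < ρ * c ^ 2 / κ ^ 2 := by
        rw [lt_div_iff₀ (by positivity), one_mul, hrc]
        linarith
      filter_upwards [q_upper (α := α) hK] with r h1
      calc κ ^ 2 * (1 + r ^ 2) ^ (α / 2) ≤ κ ^ 2 * (ρ * c ^ 2 / κ ^ 2 * r ^ α) :=
          mul_le_mul_of_nonneg_left h1 (by positivity)
        _ = ρ * (c ^ 2 * r ^ α) := by field_simp
    · have hco : 0 < c * (1 - ρ) := by nlinarith
      have hβ : (0:ℝ) < 1 + α / 2 := by linarith
      have heq : ∀ᶠ R : ℝ in atTop,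
          R * (c * (1 - ρ) - R ^ (-(1 + α / 2))) = c * (1 - ρ) * R - R ^ (-(α / 2)) := by
        filter_upwards [eventually_gt_atTop (0:ℝ)] with R hR
        have : R * R ^ (-(1 + α / 2)) = R ^ (-(α / 2)) := by
          nth_rewrite 1 [← Real.rpow_one R]
          rw [← Real.rpow_add hR]; congr 1; ring
        nlinarith [this]
      have hten : Filter.Tendsto (fun R : ℝ => c * (1 - ρ) - R ^ (-(1 + α / 2))) atTop
          (nhds (c * (1 - ρ))) := by
        simpa using (tendsto_const_nhds (x := c * (1 - ρ))).sub (tendsto_rpow_neg_atTop hβ)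
      have hmul : Filter.Tendsto (fun R : ℝ => (c * (1 - ρ) - R ^ (-(1 + α / 2))) * R) atTop atTop :=
        Filter.Tendsto.pos_mul_atTop hco hten tendsto_id
      refine Filter.Tendsto.congr' ?_ hmul
      filter_upwards [heq] with R hR
      rw [← hR]; ring

lemma hbound_lower_A {κ α c : ℝ} {h : ℝ → ℝ} (hκ : 0 < κ) (hα : -2 < α)
    (hc0 : 0 < c) (hc : c < κ)
    (hh : ∀ r : ℝ, 0 < r → HasDerivAt h (κ ^ 2 * (1 + r ^ 2) ^ (α / 2) - h r ^ 2) r)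
    (hhpos : ∀ r : ℝ, 0 < r → 0 < h r) :
    ∀ᶠ r : ℝ in atTop, c * r ^ (α / 2) ≤ h r := by
  have hc2κ2 : c ^ 2 < κ ^ 2 := by nlinarith
  set ε₁ : ℝ := (κ ^ 2 - c ^ 2) / 2 with hε₁
  have hε₁pos : 0 < ε₁ := by simp only [hε₁]; linarith
  have hK'' : (c ^ 2 + κ ^ 2) / (2 * κ ^ 2) < 1 := by
    rw [div_lt_one (by positivity)]; nlinarith
  have hK''0 : 0 < (c ^ 2 + κ ^ 2) / (2 * κ ^ 2) := by positivity
  apply barrier_lower (q := fun r => κ ^ 2 * (1 + r ^ 2) ^ (α / 2))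
    (pd := fun r => c * (α / 2 * r ^ (α / 2 - 1))) hh hhpos
  · intro r hr
    exact (Real.hasDerivAt_rpow_const (Or.inl (ne_of_gt hr))).const_mul c
  · intro r hr
    positivity
  · -- subsolution
    filter_upwards [q_lower (α := α) hK'', ev_tail hα (c * (α / 2)) ε₁ hε₁pos,
      eventually_gt_atTop (0:ℝ)] with r h1 h2 hr
    have hsq : (c * r ^ (α / 2)) ^ 2 = c ^ 2 * r ^ α := by
      rw [mul_pow, rpow_half_sq hr]
    rw [hsq]
    have h3 : (c ^ 2 + κ ^ 2) / 2 * r ^ α ≤ κ ^ 2 * (1 + r ^ 2) ^ (α / 2) := by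
      have := mul_le_mul_of_nonneg_left h1 (le_of_lt (show (0:ℝ) < κ ^ 2 by positivity))
      calc (c ^ 2 + κ ^ 2) / 2 * r ^ α = κ ^ 2 * ((c ^ 2 + κ ^ 2) / (2 * κ ^ 2) * r ^ α) := by
            field_simp
        _ ≤ κ ^ 2 * (1 + r ^ 2) ^ (α / 2) := this
    rw [hε₁] at h2
    linarith [h2, h3]
  · -- frequent crossing from below
    apply cross_lower (le_of_lt hα) hc0 (show (0:ℝ) < ε₁ / 2 by linarith) hh hhpos
    have hten : Filter.Tendsto (fun r : ℝ => |α / 2 * c| * r ^ (-(1 + α / 2))) atTop (nhds 0) := by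
      simpa using (tendsto_rpow_neg_atTop (show (0:ℝ) < 1 + α / 2 by linarith)).const_mul _
    filter_upwards [q_lower (α := α) hK'', hten.eventually_le_const (show (0:ℝ) < ε₁ / 2 by linarith),
      eventually_gt_atTop (0:ℝ)] with r h1 h2 hr
    intro x hx
    have hq2 : (c ^ 2 + κ ^ 2) / 2 ≤ κ ^ 2 * (1 + r ^ 2) ^ (α / 2) * r ^ (-α) := by
      have hrinv : r ^ α * r ^ (-α) = 1 := by
        rw [← Real.rpow_add hr]; simp
      have := mul_le_mul_of_nonneg_right
        (mul_le_mul_of_nonneg_left h1 (le_of_lt (show (0:ℝ) < κ ^ 2 by positivity)))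
        (Real.rpow_nonneg hr.le (-α))
      calc (c ^ 2 + κ ^ 2) / 2 = κ ^ 2 * ((c ^ 2 + κ ^ 2) / (2 * κ ^ 2)) * 1 := by
            field_simp
        _ = κ ^ 2 * ((c ^ 2 + κ ^ 2) / (2 * κ ^ 2) * r ^ α) * r ^ (-α) := by
            rw [mul_assoc (κ^2), mul_assoc, mul_assoc, hrinv]
        _ ≤ κ ^ 2 * (1 + r ^ 2) ^ (α / 2) * r ^ (-α) := this
    have hx2 : x ^ 2 ≤ c ^ 2 := by
      have := hx.2
      nlinarith [hx.1]
    have habs : α / 2 * x * r ^ (-(1 + α / 2)) ≤ ε₁ / 2 := by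
      calc α / 2 * x * r ^ (-(1 + α / 2)) ≤ |α / 2 * x| * r ^ (-(1 + α / 2)) :=
          mul_le_mul_of_nonneg_right (le_abs_self _) (Real.rpow_nonneg hr.le _)
        _ ≤ |α / 2 * c| * r ^ (-(1 + α / 2)) := by
          apply mul_le_mul_of_nonneg_right _ (Real.rpow_nonneg hr.le _)
          rw [abs_mul, abs_mul]
          have hxc : |x| ≤ |c| := by
            rw [abs_of_nonneg hx.1, abs_of_nonneg hc0.le]
            exact hx.2
          exact mul_le_mul_of_nonneg_left hxc (abs_nonneg _)
        _ ≤ ε₁ / 2 := h2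
    linarith [hq2, hx2, habs, hε₁]

lemma Kbar_facts {κ : ℝ} (hκ : 0 < κ) :
    1 < (1 + Real.sqrt (1 + 4 * κ ^ 2)) / 2 ∧
      ((1 + Real.sqrt (1 + 4 * κ ^ 2)) / 2) ^ 2 = (1 + Real.sqrt (1 + 4 * κ ^ 2)) / 2 + κ ^ 2 := by
  have h1 : Real.sqrt (1 + 4 * κ ^ 2) ^ 2 = 1 + 4 * κ ^ 2 :=
    Real.sq_sqrt (by positivity)
  have h2 : 1 < Real.sqrt (1 + 4 * κ ^ 2) := by
    nlinarith [h1, Real.sqrt_nonneg (1 + 4 * κ ^ 2), hκ]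
  constructor
  · linarith
  · nlinarith [h1]

lemma rpow_neg_two_eq {r : ℝ} (hr : 0 < r) : r ^ (-2:ℝ) = (r ^ 2)⁻¹ := by
  rw [show (-2:ℝ) = -((2:ℕ):ℝ) by norm_num, Real.rpow_neg hr.le, Real.rpow_natCast]

lemma rpow_two_eq (r : ℝ) : r ^ (2:ℝ) = r ^ 2 := by
  rw [show (2:ℝ) = ((2:ℕ):ℝ) by norm_num, Real.rpow_natCast]

lemma hbound_upper_B {κ c : ℝ} {h : ℝ → ℝ} (hκ : 0 < κ)
    (hc : (1 + Real.sqrt (1 + 4 * κ ^ 2)) / 2 < c)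
    (hh : ∀ r : ℝ, 0 < r → HasDerivAt h (κ ^ 2 * (1 + r ^ 2) ^ ((-2:ℝ) / 2) - h r ^ 2) r)
    (hhpos : ∀ r : ℝ, 0 < r → 0 < h r) :
    ∀ᶠ r : ℝ in atTop, h r ≤ c * r ^ ((-2:ℝ) / 2) := by
  obtain ⟨hK1, hKsq⟩ := Kbar_facts hκ
  set K : ℝ := (1 + Real.sqrt (1 + 4 * κ ^ 2)) / 2 with hKdef
  have hc1 : 1 < c := lt_trans hK1 hc
  have hc0 : 0 < c := lt_trans one_pos hc1
  have hgap : κ ^ 2 < c ^ 2 - c := by nlinarith [hKsq, hc, hK1]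
  have hexp1 : ((-2:ℝ) / 2) = -1 := by norm_num
  have hexp2 : ((-2:ℝ) / 2 - 1) = -2 := by norm_num
  apply barrier_upper (q := fun r => κ ^ 2 * (1 + r ^ 2) ^ ((-2:ℝ) / 2))
    (pd := fun r => c * ((-2:ℝ) / 2 * r ^ ((-2:ℝ) / 2 - 1))) hh hhpos
  · intro r hr
    exact (Real.hasDerivAt_rpow_const (Or.inl (ne_of_gt hr))).const_mul c
  · intro r hr
    positivity
  · -- supersolution (holds for all r > 0)
    filter_upwards [eventually_gt_atTop (0:ℝ)] with r hr
    have hr2 : (0:ℝ) < r ^ 2 := by positivity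
    have h12 : (0:ℝ) < 1 + r ^ 2 := by positivity
    simp only [hexp1, Real.rpow_neg_one]
    rw [show ((-1:ℝ) - 1) = -2 by norm_num, rpow_neg_two_eq hr, mul_pow, inv_pow]
    have e1 : κ ^ 2 * (1 + r ^ 2)⁻¹ ≤ κ ^ 2 * (r ^ 2)⁻¹ := by
      apply mul_le_mul_of_nonneg_left _ (by positivity)
      exact inv_anti₀ hr2 (by linarith)
    have e3 : κ ^ 2 * (r ^ 2)⁻¹ ≤ (c ^ 2 - c) * (r ^ 2)⁻¹ :=
      mul_le_mul_of_nonneg_right (by linarith) (by positivity)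
    calc κ ^ 2 * (1 + r ^ 2)⁻¹ ≤ (c ^ 2 - c) * (r ^ 2)⁻¹ := le_trans e1 e3
      _ = c * (-1 * (r ^ 2)⁻¹) + c ^ 2 * (r ^ 2)⁻¹ := by ring
  · -- frequent crossing
    set ρ : ℝ := (κ ^ 2 / c ^ 2 + (1 - 1 / c)) / 2 with hρ
    have hκc : κ ^ 2 / c ^ 2 < 1 := by
      rw [div_lt_one (by positivity)]
      nlinarith
    have hinvc : 0 < 1 / c := by positivity
    have hinvc1 : 1 / c < 1 := by rw [div_lt_one hc0]; exact hc1
    have hρ0 : 0 ≤ ρ := by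
      have : (0:ℝ) ≤ κ ^ 2 / c ^ 2 := by positivity
      simp only [hρ]; linarith
    have hρ1 : ρ < 1 := by simp only [hρ]; linarith
    have hρc2 : ρ * c ^ 2 = (κ ^ 2 + c ^ 2 - c) / 2 := by
      rw [hρ]; field_simp; ring
    have hcρ : c * (1 - ρ) - 1 > 0 := by
      have hcρ2 : c * ρ = (κ ^ 2 / c + c - 1) / 2 := by
        rw [hρ]; field_simp; ring
      have hκc2 : κ ^ 2 / c < c - 1 := by
        rw [div_lt_iff₀ hc0]; nlinarith
      nlinarith [hcρ2, hκc2]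
    apply cross_upper (α := (-2:ℝ)) hc0 hρ0 hρ1 hh hhpos
    · filter_upwards [eventually_gt_atTop (0:ℝ)] with r hr
      have hr2 : (0:ℝ) < r ^ 2 := by positivity
      simp only [hexp1, Real.rpow_neg_one]
      rw [rpow_neg_two_eq hr]
      have e1 : κ ^ 2 * (1 + r ^ 2)⁻¹ ≤ κ ^ 2 * (r ^ 2)⁻¹ := by
        apply mul_le_mul_of_nonneg_left _ (by positivity)
        exact inv_anti₀ hr2 (by linarith)
      have e3 : κ ^ 2 * (r ^ 2)⁻¹ ≤ (κ ^ 2 + c ^ 2 - c) / 2 * (r ^ 2)⁻¹ :=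
        mul_le_mul_of_nonneg_right (by linarith) (by positivity)
      calc κ ^ 2 * (1 + r ^ 2)⁻¹ ≤ (κ ^ 2 + c ^ 2 - c) / 2 * (r ^ 2)⁻¹ := le_trans e1 e3
        _ = ρ * (c ^ 2 * (r ^ 2)⁻¹) := by rw [← mul_assoc, hρc2]
    · have heq : ∀ R : ℝ, c * (1 - ρ) * R - R ^ (-((-2:ℝ) / 2)) = (c * (1 - ρ) - 1) * R := by
        intro R
        rw [show (-((-2:ℝ) / 2)) = 1 by norm_num, Real.rpow_one]
        ring
      have := Filter.Tendsto.const_mul_atTop hcρ (tendsto_id (α := ℝ) (x := atTop))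
      refine Filter.Tendsto.congr (fun R => (heq R).symm) ?_
      simpa using this

lemma hbound_lower_B {κ c : ℝ} {h : ℝ → ℝ} (hκ : 0 < κ) (hc0 : 0 < c)
    (hc : c < (1 + Real.sqrt (1 + 4 * κ ^ 2)) / 2)
    (hh : ∀ r : ℝ, 0 < r → HasDerivAt h (κ ^ 2 * (1 + r ^ 2) ^ ((-2:ℝ) / 2) - h r ^ 2) r)
    (hhpos : ∀ r : ℝ, 0 < r → 0 < h r) :
    ∀ᶠ r : ℝ in atTop, c * r ^ ((-2:ℝ) / 2) ≤ h r := by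
  obtain ⟨hK1, hKsq⟩ := Kbar_facts hκ
  set K : ℝ := (1 + Real.sqrt (1 + 4 * κ ^ 2)) / 2 with hKdef
  have hgap : c ^ 2 - c < κ ^ 2 := by nlinarith [hKsq, hc, hK1, hc0]
  set ε₂ : ℝ := κ ^ 2 - (c ^ 2 - c) with hε₂
  have hε₂pos : 0 < ε₂ := by simp only [hε₂]; linarith
  have hexp1 : ((-2:ℝ) / 2) = -1 := by norm_num
  have hexp2 : ((-2:ℝ) / 2 - 1) = -2 := by norm_num
  apply barrier_lower (q := fun r => κ ^ 2 * (1 + r ^ 2) ^ ((-2:ℝ) / 2))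
    (pd := fun r => c * ((-2:ℝ) / 2 * r ^ ((-2:ℝ) / 2 - 1))) hh hhpos
  · intro r hr
    exact (Real.hasDerivAt_rpow_const (Or.inl (ne_of_gt hr))).const_mul c
  · intro r hr
    positivity
  · -- subsolution, eventually
    filter_upwards [eventually_ge_atTop (max 1 ((|c ^ 2 - c| + 1) / ε₂))] with r hr
    have hr1 : (1:ℝ) ≤ r := le_trans (le_max_left _ _) hr
    have hr0 : (0:ℝ) < r := lt_of_lt_of_le one_pos hr1
    have hr2 : (0:ℝ) < r ^ 2 := by positivity
    have h12 : (0:ℝ) < 1 + r ^ 2 := by positivity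
    have hrB : (|c ^ 2 - c| + 1) / ε₂ ≤ r := le_trans (le_max_right _ _) hr
    have hrB2 : |c ^ 2 - c| + 1 ≤ ε₂ * r := by
      rw [div_le_iff₀ hε₂pos] at hrB
      linarith [hrB]
    have hmain : (c ^ 2 - c) * (1 + r ^ 2) ≤ κ ^ 2 * r ^ 2 := by
      have habs : c ^ 2 - c ≤ |c ^ 2 - c| := le_abs_self _
      have hrr : r ≤ r ^ 2 := by nlinarith
      have : ε₂ * r ≤ ε₂ * r ^ 2 := mul_le_mul_of_nonneg_left hrr hε₂pos.le
      simp only [hε₂] at *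
      nlinarith [habs, hrB2, this]
    simp only [hexp1, Real.rpow_neg_one]
    rw [show ((-1:ℝ) - 1) = -2 by norm_num, rpow_neg_two_eq hr0, mul_pow, inv_pow]
    have hfin : (c ^ 2 - c) * (r ^ 2)⁻¹ ≤ κ ^ 2 * (1 + r ^ 2)⁻¹ := by
      have hdivle : (c ^ 2 - c) / (r ^ 2) ≤ κ ^ 2 / (1 + r ^ 2) := by
        rw [div_le_div_iff₀ hr2 h12]
        nlinarith [hmain]
      rw [div_eq_mul_inv, div_eq_mul_inv] at hdivle
      exact hdivle
    calc c * (-1 * (r ^ 2)⁻¹) + c ^ 2 * (r ^ 2)⁻¹ = (c ^ 2 - c) * (r ^ 2)⁻¹ := by ring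
      _ ≤ κ ^ 2 * (1 + r ^ 2)⁻¹ := hfin
  · -- frequent crossing from below
    have hδ : (0:ℝ) < (K - c) * (K - 1) / 2 :=
      div_pos (mul_pos (by linarith) (by linarith)) two_pos
    apply cross_lower (α := (-2:ℝ)) (by norm_num) hc0 hδ hh hhpos
    have hten : Filter.Tendsto (fun r : ℝ => κ ^ 2 * (r ^ 2)⁻¹) atTop (nhds 0) := by
      have := (tendsto_pow_atTop (n := 2) (by norm_num)).inv_tendsto_atTop (𝕜 := ℝ)
      simpa using this.const_mul (κ ^ 2)
    filter_upwards [hten.eventually_le_const hδ, eventually_gt_atTop (0:ℝ)] with r h1 hr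
    intro x hx
    have hr2 : (0:ℝ) < r ^ 2 := by positivity
    have h12 : (0:ℝ) < 1 + r ^ 2 := by positivity
    have e1 : r ^ (-(-2:ℝ)) = r ^ 2 := by
      rw [show (-(-2:ℝ)) = ((2:ℕ):ℝ) by norm_num, Real.rpow_natCast]
    have e2 : r ^ (-(1 + (-2:ℝ) / 2)) = 1 := by
      rw [show (-(1 + (-2:ℝ) / 2)) = 0 by norm_num, Real.rpow_zero]
    rw [e1, e2]
    simp only [hexp1, Real.rpow_neg_one]
    have hq1 : κ ^ 2 - κ ^ 2 * (r ^ 2)⁻¹ ≤ κ ^ 2 * (1 + r ^ 2)⁻¹ * r ^ 2 := by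
      have : κ ^ 2 * (1 + r ^ 2)⁻¹ * r ^ 2 = κ ^ 2 - κ ^ 2 * (1 + r ^ 2)⁻¹ := by
        field_simp
        ring
      rw [this]
      have : (1 + r ^ 2)⁻¹ ≤ (r ^ 2)⁻¹ := inv_anti₀ hr2 (by linarith)
      nlinarith [this]
    have hprod : (K - c) * (K - 1) ≤ (K - x) * (x + K - 1) :=
      mul_le_mul (by linarith [hx.2]) (by linarith [hx.1]) (by linarith) (by linarith [hx.2, hc])
    have hexp3 : (K - x) * (x + K - 1) = K ^ 2 - K + x - x ^ 2 := by ring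
    have hid : K ^ 2 - K = κ ^ 2 := by linarith [hKsq]
    linarith [hq1, hprod, hexp3.le, hexp3.ge, hid, h1]

lemma integrate_le {L Φ h p : ℝ → ℝ} {r₁ : ℝ} (hr₁ : 0 < r₁)
    (hL : ∀ r : ℝ, 0 < r → HasDerivAt L (h r) r)
    (hΦ : ∀ r : ℝ, 0 < r → HasDerivAt Φ (p r) r)
    (hle : ∀ r : ℝ, r₁ ≤ r → h r ≤ p r) :
    ∀ R : ℝ, r₁ ≤ R → L R ≤ L r₁ + (Φ R - Φ r₁) := by
  intro R hR
  have key := mono_of_deriv (a := r₁) (b := R) hR (f := fun r => Φ r - L r)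
    (f' := fun r => p r - h r)
    (fun r hr => (hΦ r (lt_of_lt_of_le hr₁ hr.1)).sub (hL r (lt_of_lt_of_le hr₁ hr.1)))
    (fun r hr => by
      have := hle r hr.1.le
      show (0:ℝ) ≤ p r - h r
      linarith)
  linarith

/-- Asymptotics for the Jacobi-type ODE `g'' = κ²(1+r²)^{α/2} g`,
`g(0)=0`, `g'(0)=1`, with `κ > 0`, `α ≥ −2`: if `α > −2` then
`log g(r) / r^{1+α/2} → 2κ/(2+α)`; if `α = −2` then
`log g(r)/log r → κ̄ = (1+√(1+4κ²))/2` as `r → ∞`. -/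
theorem jacobi_ode_asymptotics (κ α : ℝ) (hκ : 0 < κ) (hα : -2 ≤ α)
    (g g' : ℝ → ℝ)
    (hg : ∀ r, 0 ≤ r → HasDerivAt g (g' r) r)
    (hg' : ∀ r, 0 ≤ r → HasDerivAt g' (κ ^ 2 * (1 + r ^ 2) ^ (α / 2) * g r) r)
    (hg0 : g 0 = 0) (hg'0 : g' 0 = 1) :
    (-2 < α → Filter.Tendsto (fun r => Real.log (g r) / r ^ (1 + α / 2)) Filter.atTop
      (nhds (2 * κ / (2 + α)))) ∧
    (α = -2 → Filter.Tendsto (fun r => Real.log (g r) / Real.log r) Filter.atTop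
      (nhds ((1 + Real.sqrt (1 + 4 * κ ^ 2)) / 2))) := by
  obtain ⟨hgpos, hg'ge⟩ := g_positivity κ α g g' hg hg' hg0 hg'0
  set h : ℝ → ℝ := fun r => g' r / g r with hhdef
  have hhpos : ∀ r : ℝ, 0 < r → 0 < h r := fun r hr =>
    div_pos (lt_of_lt_of_le one_pos (hg'ge r hr.le)) (hgpos r hr)
  have hhd : ∀ r : ℝ, 0 < r → HasDerivAt h (κ ^ 2 * (1 + r ^ 2) ^ (α / 2) - h r ^ 2) r := by
    intro r hr
    have hgne : g r ≠ 0 := ne_of_gt (hgpos r hr)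
    have hd := (hg' r hr.le).div (hg r hr.le) hgne
    simp only [hhdef]
    refine hd.congr_deriv (Eq.symm ?_)
    field_simp
  have hlog : ∀ r : ℝ, 0 < r → HasDerivAt (fun s => Real.log (g s)) (h r) r := by
    intro r hr
    simp only [hhdef]
    exact (hg r hr.le).log (ne_of_gt (hgpos r hr))
  constructor
  · -- case α > -2
    intro hα2
    have hβ : (0:ℝ) < 1 + α / 2 := by linarith
    have hβne : (1 + α / 2) ≠ 0 := ne_of_gt hβ
    have hLeq : 2 * κ / (2 + α) = κ / (1 + α / 2) := by
      rw [div_eq_div_iff (by linarith) (by linarith)]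
      ring
    rw [hLeq, tendsto_order]
    have hΦd : ∀ c : ℝ, ∀ r : ℝ, 0 < r →
        HasDerivAt (fun s : ℝ => c / (1 + α / 2) * s ^ (1 + α / 2)) (c * r ^ (α / 2)) r := by
      intro c r hr
      have := (Real.hasDerivAt_rpow_const (p := 1 + α / 2)
        (Or.inl (ne_of_gt hr))).const_mul (c / (1 + α / 2))
      refine this.congr_deriv (Eq.symm ?_)
      rw [show (1 + α / 2 - 1) = α / 2 by ring]
      have h2α : (2:ℝ) + α ≠ 0 := ne_of_gt (by linarith)
      field_simp
    constructor
    · -- lower bound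
      intro a ha
      set c : ℝ := (max 0 ((1 + α / 2) * a) + κ) / 2 with hcdef
      have hm0 : (0:ℝ) ≤ max 0 ((1 + α / 2) * a) := le_max_left _ _
      have hmκ : max 0 ((1 + α / 2) * a) < κ := by
        apply max_lt hκ
        rw [lt_div_iff₀ hβ] at ha
        linarith
      have hc0 : 0 < c := by simp only [hcdef]; linarith
      have hcκ : c < κ := by simp only [hcdef]; linarith
      have hca : (1 + α / 2) * a < c := by
        have h9 : (1 + α / 2) * a ≤ max 0 ((1 + α / 2) * a) := le_max_right _ _
        simp only [hcdef]; linarith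
      have hev := hbound_lower_A hκ hα2 hc0 hcκ hhd hhpos
      obtain ⟨r₁, hr₁⟩ := Filter.eventually_atTop.1 hev
      set r₂ : ℝ := max r₁ 1 with hr₂def
      have hr₂1 : (1:ℝ) ≤ r₂ := le_max_right _ _
      have hr₂0 : (0:ℝ) < r₂ := lt_of_lt_of_le one_pos hr₂1
      have hint := integrate_le (L := fun s : ℝ => c / (1 + α / 2) * s ^ (1 + α / 2))
        (Φ := fun s : ℝ => Real.log (g s)) (h := fun r : ℝ => c * r ^ (α / 2)) (p := h)
        hr₂0 (hΦd c) hlog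
        (fun r hr => hr₁ r (le_trans (le_max_left _ _) hr))
      set A : ℝ := Real.log (g r₂) - c / (1 + α / 2) * r₂ ^ (1 + α / 2) with hAdef
      have htend : Filter.Tendsto (fun R : ℝ => A * R ^ (-(1 + α / 2)) + c / (1 + α / 2))
          atTop (nhds (c / (1 + α / 2))) := by
        have := ((tendsto_rpow_neg_atTop hβ).const_mul A).add
          (tendsto_const_nhds (x := c / (1 + α / 2)))
        simpa using this
      have hgt : a < c / (1 + α / 2) := by
        rw [lt_div_iff₀ hβ]
        linarith
      filter_upwards [htend.eventually_const_lt hgt, eventually_ge_atTop r₂,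
        eventually_ge_atTop (1:ℝ)] with R h1 h2 h3
      have hR0 : (0:ℝ) < R := lt_of_lt_of_le one_pos h3
      have hRβ : (0:ℝ) < R ^ (1 + α / 2) := Real.rpow_pos_of_pos hR0 _
      have hkey := hint R h2
      have hlow : A * R ^ (-(1 + α / 2)) + c / (1 + α / 2) ≤ Real.log (g R) / R ^ (1 + α / 2) := by
        rw [le_div_iff₀ hRβ]
        have hinv : R ^ (-(1 + α / 2)) * R ^ (1 + α / 2) = 1 := by
          rw [← Real.rpow_add hR0, show (-(1 + α / 2) + (1 + α / 2)) = (0:ℝ) by ring,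
            Real.rpow_zero]
        calc (A * R ^ (-(1 + α / 2)) + c / (1 + α / 2)) * R ^ (1 + α / 2)
            = A * (R ^ (-(1 + α / 2)) * R ^ (1 + α / 2)) + c / (1 + α / 2) * R ^ (1 + α / 2) := by
              ring
          _ = A + c / (1 + α / 2) * R ^ (1 + α / 2) := by rw [hinv]; ring
          _ ≤ Real.log (g R) := by simp only [hAdef]; linarith [hkey]
      exact lt_of_lt_of_le h1 hlow
    · -- upper bound
      intro b hb
      set c : ℝ := (κ + (1 + α / 2) * b) / 2 with hcdef
      have hbκ : κ < (1 + α / 2) * b := by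
        rw [gt_iff_lt, div_lt_iff₀ hβ] at hb
        linarith [hb]
      have hcκ : κ < c := by simp only [hcdef]; linarith
      have hcb : c < (1 + α / 2) * b := by simp only [hcdef]; linarith
      have hev := hbound_upper_A hκ hα2 hcκ hhd hhpos
      obtain ⟨r₁, hr₁⟩ := Filter.eventually_atTop.1 hev
      set r₂ : ℝ := max r₁ 1 with hr₂def
      have hr₂1 : (1:ℝ) ≤ r₂ := le_max_right _ _
      have hr₂0 : (0:ℝ) < r₂ := lt_of_lt_of_le one_pos hr₂1
      have hint := integrate_le (L := fun s : ℝ => Real.log (g s))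
        (Φ := fun s : ℝ => c / (1 + α / 2) * s ^ (1 + α / 2)) (h := h)
        (p := fun r : ℝ => c * r ^ (α / 2))
        hr₂0 hlog (hΦd c)
        (fun r hr => hr₁ r (le_trans (le_max_left _ _) hr))
      set A : ℝ := Real.log (g r₂) - c / (1 + α / 2) * r₂ ^ (1 + α / 2) with hAdef
      have htend : Filter.Tendsto (fun R : ℝ => A * R ^ (-(1 + α / 2)) + c / (1 + α / 2))
          atTop (nhds (c / (1 + α / 2))) := by
        have := ((tendsto_rpow_neg_atTop hβ).const_mul A).add
          (tendsto_const_nhds (x := c / (1 + α / 2)))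
        simpa using this
      have hgt : c / (1 + α / 2) < b := by
        rw [div_lt_iff₀ hβ]
        linarith
      filter_upwards [htend.eventually_lt_const hgt, eventually_ge_atTop r₂,
        eventually_ge_atTop (1:ℝ)] with R h1 h2 h3
      have hR0 : (0:ℝ) < R := lt_of_lt_of_le one_pos h3
      have hRβ : (0:ℝ) < R ^ (1 + α / 2) := Real.rpow_pos_of_pos hR0 _
      have hkey := hint R h2
      have hup : Real.log (g R) / R ^ (1 + α / 2) ≤ A * R ^ (-(1 + α / 2)) + c / (1 + α / 2) := by
        rw [div_le_iff₀ hRβ]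
        have hinv : R ^ (-(1 + α / 2)) * R ^ (1 + α / 2) = 1 := by
          rw [← Real.rpow_add hR0, show (-(1 + α / 2) + (1 + α / 2)) = (0:ℝ) by ring,
            Real.rpow_zero]
        calc Real.log (g R) ≤ A + c / (1 + α / 2) * R ^ (1 + α / 2) := by
              simp only [hAdef]; linarith [hkey]
          _ = (A * R ^ (-(1 + α / 2)) + c / (1 + α / 2)) * R ^ (1 + α / 2) := by
              rw [add_mul, mul_assoc, hinv]; ring
      exact lt_of_le_of_lt hup h1
  · -- case α = -2
    intro hα2
    subst hα2
    obtain ⟨hK1, hKsq⟩ := Kbar_facts hκ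
    rw [tendsto_order]
    have hΦd : ∀ c : ℝ, ∀ r : ℝ, 0 < r →
        HasDerivAt (fun s : ℝ => c * Real.log s) (c * r ^ ((-2:ℝ) / 2)) r := by
      intro c r hr
      have := (Real.hasDerivAt_log (ne_of_gt hr)).const_mul c
      refine this.congr_deriv (Eq.symm ?_)
      rw [show ((-2:ℝ) / 2) = -1 by norm_num, Real.rpow_neg_one]
    constructor
    · -- lower
      intro a ha
      set K : ℝ := (1 + Real.sqrt (1 + 4 * κ ^ 2)) / 2 with hKdef
      set c : ℝ := (max 0 a + K) / 2 with hcdef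
      have hm0 : (0:ℝ) ≤ max 0 a := le_max_left _ _
      have hmK : max 0 a < K := max_lt (by linarith) ha
      have hc0 : 0 < c := by simp only [hcdef]; linarith
      have hcK : c < K := by simp only [hcdef]; linarith
      have hca : a < c := by
        have h9 : a ≤ max 0 a := le_max_right _ _
        simp only [hcdef]; linarith
      have hev := hbound_lower_B hκ hc0 hcK hhd hhpos
      obtain ⟨r₁, hr₁⟩ := Filter.eventually_atTop.1 hev
      set r₂ : ℝ := max r₁ 1 with hr₂def
      have hr₂1 : (1:ℝ) ≤ r₂ := le_max_right _ _
      have hr₂0 : (0:ℝ) < r₂ := lt_of_lt_of_le one_pos hr₂1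
      have hint := integrate_le (L := fun s : ℝ => c * Real.log s)
        (Φ := fun s : ℝ => Real.log (g s)) (h := fun r : ℝ => c * r ^ ((-2:ℝ) / 2)) (p := h)
        hr₂0 (hΦd c) hlog
        (fun r hr => hr₁ r (le_trans (le_max_left _ _) hr))
      set A : ℝ := Real.log (g r₂) - c * Real.log r₂ with hAdef
      have htend : Filter.Tendsto (fun R : ℝ => A * (Real.log R)⁻¹ + c) atTop (nhds c) := by
        have h0 := (Real.tendsto_log_atTop.inv_tendsto_atTop).const_mul A
        have := h0.add (tendsto_const_nhds (x := c))
        simpa using this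
      filter_upwards [htend.eventually_const_lt hca, eventually_ge_atTop r₂,
        eventually_ge_atTop (2:ℝ)] with R h1 h2 h3
      have hR0 : (0:ℝ) < R := by linarith
      have hlogR : (0:ℝ) < Real.log R := Real.log_pos (by linarith)
      have hkey := hint R h2
      have hlow : A * (Real.log R)⁻¹ + c ≤ Real.log (g R) / Real.log R := by
        rw [le_div_iff₀ hlogR]
        have hinv : (Real.log R)⁻¹ * Real.log R = 1 := inv_mul_cancel₀ (ne_of_gt hlogR)
        calc (A * (Real.log R)⁻¹ + c) * Real.log R
            = A * ((Real.log R)⁻¹ * Real.log R) + c * Real.log R := by ring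
          _ = A + c * Real.log R := by rw [hinv]; ring
          _ ≤ Real.log (g R) := by simp only [hAdef]; linarith [hkey]
      exact lt_of_lt_of_le h1 hlow
    · -- upper
      intro b hb
      set K : ℝ := (1 + Real.sqrt (1 + 4 * κ ^ 2)) / 2 with hKdef
      set c : ℝ := (K + b) / 2 with hcdef
      have hcK : K < c := by simp only [hcdef]; linarith
      have hcb : c < b := by simp only [hcdef]; linarith
      have hev := hbound_upper_B hκ hcK hhd hhpos
      obtain ⟨r₁, hr₁⟩ := Filter.eventually_atTop.1 hev
      set r₂ : ℝ := max r₁ 1 with hr₂def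
      have hr₂1 : (1:ℝ) ≤ r₂ := le_max_right _ _
      have hr₂0 : (0:ℝ) < r₂ := lt_of_lt_of_le one_pos hr₂1
      have hint := integrate_le (L := fun s : ℝ => Real.log (g s))
        (Φ := fun s : ℝ => c * Real.log s) (h := h) (p := fun r : ℝ => c * r ^ ((-2:ℝ) / 2))
        hr₂0 hlog (hΦd c)
        (fun r hr => hr₁ r (le_trans (le_max_left _ _) hr))
      set A : ℝ := Real.log (g r₂) - c * Real.log r₂ with hAdef
      have htend : Filter.Tendsto (fun R : ℝ => A * (Real.log R)⁻¹ + c) atTop (nhds c) := by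
        have h0 := (Real.tendsto_log_atTop.inv_tendsto_atTop).const_mul A
        have := h0.add (tendsto_const_nhds (x := c))
        simpa using this
      filter_upwards [htend.eventually_lt_const hcb, eventually_ge_atTop r₂,
        eventually_ge_atTop (2:ℝ)] with R h1 h2 h3
      have hR0 : (0:ℝ) < R := by linarith
      have hlogR : (0:ℝ) < Real.log R := Real.log_pos (by linarith)
      have hkey := hint R h2
      have hup : Real.log (g R) / Real.log R ≤ A * (Real.log R)⁻¹ + c := by
        rw [div_le_iff₀ hlogR]
        have hinv : (Real.log R)⁻¹ * Real.log R = 1 := inv_mul_cancel₀ (ne_of_gt hlogR)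
        calc Real.log (g R) ≤ A + c * Real.log R := by
              simp only [hAdef]; linarith [hkey]
          _ = (A * (Real.log R)⁻¹ + c) * Real.log R := by
              rw [add_mul, mul_assoc, hinv]; ring
      exact lt_of_le_of_lt hup h1
end
end
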